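/- The function l : ℂ² → ℂ, l(w₁, w₂) = ∫∫ exp(−i·Im(z₁w₁ + z₂w₂ − (s/4)·z₁·conj(z₂))) / ((1+|z₁|²)²·(1+|z₂|²)²) d²z₁ d²z₂ is well defined (the integrand is absolutely integrable) and l ∈ L¹(ℂ²), i.e., ∫∫ |l(w₁,w₂)| d²w₁ d²w₂ < ∞. -/

import Mathlib

open MeasureTheory

/-- The integrand of the function `l`: the twisted Fourier kernel divided by
`(1+|z₁|²)² (1+|z₂|²)²`. -/
noncomputable def lInt (s : ℝ) (w z : ℂ × ℂ) : ℂ :=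
  Complex.exp (-Complex.I *
      (((z.1 * w.1 + z.2 * w.2 - ((s / 4 : ℝ) : ℂ) * z.1 * (starRingEnd ℂ z.2)).im : ℝ) : ℂ)) /
    (((1 + ‖z.1‖ ^ 2) ^ 2 * (1 + ‖z.2‖ ^ 2) ^ 2 : ℝ) : ℂ)

namespace Stmt16

open Set Complex Real

noncomputable section

/-- subordination profile -/
def q (c r : ℝ) : ℝ := r * Real.exp (-(c * r))

/-- the unimodular phase -/
def phF (s : ℝ) (w z : ℂ × ℂ) : ℂ :=
  Complex.exp (-Complex.I *
      (((z.1 * w.1 + z.2 * w.2 - ((s / 4 : ℝ) : ℂ) * z.1 * (starRingEnd ℂ z.2)).im : ℝ) : ℂ))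

def QF (z : ℂ × ℂ) (r : ℝ × ℝ) : ℝ :=
  q (1 + Complex.normSq z.1) r.1 * q (1 + Complex.normSq z.2) r.2

def μr : Measure (ℝ × ℝ) :=
  (volume.restrict (Set.Ioi (0:ℝ))).prod (volume.restrict (Set.Ioi (0:ℝ)))

def F2 (s : ℝ) (p : (ℝ × ℝ) × (ℂ × ℂ)) : ℂ :=
  ∫ z : ℂ × ℂ, phF s p.2 z * ((QF z p.1 : ℝ) : ℂ)

instance : SFinite μr := by unfold μr; infer_instance

/-- shifted center -/
def uC (s : ℝ) (w : ℂ × ℂ) (z₁ : ℂ) : ℂ := w.2 + ((s / 4 : ℝ) : ℂ) * (starRingEnd ℂ) z₁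

def ρC (s r₁ r₂ : ℝ) : ℝ := r₁ + (s/4)^2 / (4*r₂)

def A1 (s r₂ : ℝ) (w : ℂ × ℂ) : ℝ := -((s/4) * w.2.re / (2*r₂))
def A2 (s r₂ : ℝ) (w : ℂ × ℂ) : ℝ := (s/4) * w.2.im / (2*r₂)

def C1 (s r₁ r₂ : ℝ) (w : ℂ × ℂ) : ℂ := (A1 s r₂ w : ℂ) - Complex.I * (w.1.im : ℂ)
def C2 (s r₁ r₂ : ℝ) (w : ℂ × ℂ) : ℂ := (A2 s r₂ w : ℂ) - Complex.I * (w.1.re : ℂ)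

/-- closed-form norm bound -/
def Kf (s r₁ r₂ : ℝ) (w : ℂ × ℂ) : ℝ :=
  (r₁ * rexp (-r₁) * (r₂ * rexp (-r₂)) * (π/r₂) * (π/ρC s r₁ r₂)) *
    (rexp (-(r₂/(4*(r₂ * ρC s r₁ r₂)) * Complex.normSq w.1)) *
      rexp (-(r₁/(4*(r₂ * ρC s r₁ r₂)) * Complex.normSq w.2)))

lemma q_integrableOn {c : ℝ} (hc : 0 < c) : IntegrableOn (fun r => q c r) (Ioi (0:ℝ)) := by
  have h := integrableOn_rpow_mul_exp_neg_mul_rpow (p := 1) (s := 1) (b := c)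
    (by norm_num) one_pos hc
  refine h.congr_fun (fun x hx => ?_) measurableSet_Ioi
  simp only [Real.rpow_one, q, neg_mul]

lemma q_integral {c : ℝ} (hc : 0 < c) : ∫ r in Ioi (0:ℝ), q c r = (c^2)⁻¹ := by
  have h := integral_rpow_mul_exp_neg_mul_Ioi (a := 2) (r := c) (by norm_num) hc
  have h2 : ∫ t in Ioi (0:ℝ), t ^ ((2:ℝ)-1) * rexp (-(c*t)) = ∫ r in Ioi (0:ℝ), q c r := by
    refine setIntegral_congr_fun measurableSet_Ioi (fun t ht => ?_)
    rw [show (2:ℝ)-1 = 1 by norm_num, Real.rpow_one]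
    rfl
  rw [h2] at h
  rw [h, show (2:ℝ) = ((2:ℕ):ℝ) by norm_num, Real.rpow_natCast,
    show Real.Gamma ((2:ℕ):ℝ) = 1 by
      rw [show (((2:ℕ)):ℝ) = ((1:ℕ):ℝ)+1 by norm_num, Real.Gamma_nat_eq_factorial]; norm_num]
  field_simp

lemma norm_phase (x : ℝ) : ‖Complex.exp (-Complex.I * (x:ℂ))‖ = 1 := by
  rw [Complex.norm_exp]
  simp

lemma gauss1d {c : ℝ} (hc : 0 < c) : Integrable (fun x : ℝ => rexp (-(c * x^2))) := by
  simpa [neg_mul] using integrable_exp_neg_mul_sq hc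

lemma gaussR_integrable {c : ℝ} (hc : 0 < c) :
    Integrable (fun z : ℂ => rexp (-(c * Complex.normSq z))) := by
  have emb := Complex.measurableEquivRealProd.measurableEmbedding
  have mp := Complex.volume_preserving_equiv_real_prod
  have hg : Integrable (fun p : ℝ × ℝ => rexp (-(c * p.1^2)) * rexp (-(c * p.2^2))) := by
    rw [MeasureTheory.Measure.volume_eq_prod]
    exact (gauss1d hc).mul_prod (gauss1d hc)
  have h2 := (mp.integrable_comp_emb emb).2 hg
  refine h2.congr (Filter.Eventually.of_forall fun z => ?_)
  show rexp (-(c * z.re^2)) * rexp (-(c * z.im^2)) = rexp (-(c * Complex.normSq z))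
  simp only [← Real.exp_add, Complex.normSq_apply]
  ring_nf

lemma gaussR_integral {c : ℝ} (hc : 0 < c) :
    ∫ z : ℂ, rexp (-(c * Complex.normSq z)) = π / c := by
  have emb := Complex.measurableEquivRealProd.measurableEmbedding
  have mp := Complex.volume_preserving_equiv_real_prod
  have h0 : (∫ z : ℂ, rexp (-(c * Complex.normSq z))) =
      ∫ p : ℝ × ℝ, rexp (-(c * p.1^2)) * rexp (-(c * p.2^2)) := by
    rw [← mp.integral_comp emb (fun p : ℝ × ℝ => rexp (-(c * p.1^2)) * rexp (-(c * p.2^2)))]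
    refine integral_congr_ae (Filter.Eventually.of_forall fun z => ?_)
    show rexp (-(c * Complex.normSq z)) = rexp (-(c * z.re^2)) * rexp (-(c * z.im^2))
    simp only [← Real.exp_add, Complex.normSq_apply]
    ring_nf
  rw [h0, MeasureTheory.Measure.volume_eq_prod,
    integral_prod_mul (f := fun x : ℝ => rexp (-(c * x^2))) (g := fun x : ℝ => rexp (-(c * x^2)))]
  have h1 : (∫ x : ℝ, rexp (-(c * x^2))) = Real.sqrt (π / c) := by
    rw [← integral_gaussian]
    exact integral_congr_ae (Filter.Eventually.of_forall fun x => by simp [neg_mul])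
  rw [h1, Real.mul_self_sqrt (by positivity)]

lemma gaussC {r : ℝ} (hr : 0 < r) (c₁ c₂ : ℂ) :
    ∫ z : ℂ, Complex.exp (((-r : ℝ) : ℂ) * z.re^2 + c₁ * z.re +
        (((-r : ℝ) : ℂ) * z.im^2 + c₂ * z.im)) =
      ((π/r : ℝ) : ℂ) * Complex.exp ((c₁^2 + c₂^2)/(4*(r:ℂ))) := by
  have emb := Complex.measurableEquivRealProd.measurableEmbedding
  have mp := Complex.volume_preserving_equiv_real_prod
  have hb : (((-r : ℝ)) : ℂ).re < 0 := by simpa using hr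
  have h0 : (∫ z : ℂ, Complex.exp (((-r : ℝ) : ℂ) * z.re^2 + c₁ * z.re +
        (((-r : ℝ) : ℂ) * z.im^2 + c₂ * z.im))) =
      ∫ p : ℝ × ℝ, Complex.exp (((-r : ℝ) : ℂ) * p.1^2 + c₁ * p.1 + 0) *
        Complex.exp (((-r : ℝ) : ℂ) * p.2^2 + c₂ * p.2 + 0) := by
    rw [← mp.integral_comp emb (fun p : ℝ × ℝ => Complex.exp (((-r : ℝ) : ℂ) * p.1^2 + c₁ * p.1 + 0) *
        Complex.exp (((-r : ℝ) : ℂ) * p.2^2 + c₂ * p.2 + 0))]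
    refine integral_congr_ae (Filter.Eventually.of_forall fun z => ?_)
    simp only [Complex.measurableEquivRealProd_apply]
    rw [← Complex.exp_add]
    congr 1
    ring
  rw [h0, MeasureTheory.Measure.volume_eq_prod,
    integral_prod_mul (f := fun x : ℝ => Complex.exp (((-r : ℝ) : ℂ) * x^2 + c₁ * x + 0))
      (g := fun x : ℝ => Complex.exp (((-r : ℝ) : ℂ) * x^2 + c₂ * x + 0)),
    integral_cexp_quadratic hb c₁ 0, integral_cexp_quadratic hb c₂ 0]
  have h1 : ((π:ℂ) / -(((-r : ℝ)) : ℂ)) = ((π/r : ℝ) : ℂ) := by push_cast; ring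
  have h2 : ∀ c : ℂ, (0:ℂ) - c^2/(4*(((-r : ℝ)) : ℂ)) = c^2/(4*(r:ℂ)) := by
    intro c; push_cast; rw [mul_neg, div_neg]; ring
  rw [h1, h2, h2]
  have hne : ((π/r : ℝ) : ℂ) ≠ 0 := by
    rw [Complex.ofReal_ne_zero]
    positivity
  rw [mul_mul_mul_comm, ← Complex.cpow_add _ _ hne, ← Complex.exp_add,
    show (1/2 + 1/2 : ℂ) = 1 by norm_num, Complex.cpow_one, ← add_div]

lemma gaussTwist {r : ℝ} (hr : 0 < r) (u : ℂ) :
    ∫ z : ℂ, Complex.exp (-Complex.I * (((z * u).im : ℝ) : ℂ)) * ((rexp (-(r * Complex.normSq z)) : ℝ) : ℂ)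
      = (((π/r) * rexp (-(Complex.normSq u / (4*r))) : ℝ) : ℂ) := by
  have key : ∀ z : ℂ, Complex.exp (-Complex.I * (((z * u).im : ℝ) : ℂ)) * ((rexp (-(r * Complex.normSq z)) : ℝ) : ℂ)
      = Complex.exp (((-r : ℝ) : ℂ) * z.re^2 + (-Complex.I * (u.im : ℂ)) * z.re +
          (((-r : ℝ) : ℂ) * z.im^2 + (-Complex.I * (u.re : ℂ)) * z.im)) := by
    intro z
    rw [Complex.ofReal_exp, ← Complex.exp_add]
    congr 1
    simp only [Complex.mul_im, Complex.normSq_apply]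
    push_cast
    ring
  simp only [key]
  rw [gaussC hr (-Complex.I * (u.im : ℂ)) (-Complex.I * (u.re : ℂ))]
  have hexp : ((-Complex.I * (u.im:ℂ))^2 + (-Complex.I * (u.re:ℂ))^2)/(4*(r:ℂ))
      = ((-(Complex.normSq u / (4*r)) : ℝ) : ℂ) := by
    push_cast [Complex.normSq_apply]
    linear_combination (((u.im:ℂ))^2 + ((u.re:ℂ))^2)/(4*(r:ℂ)) * Complex.I_sq
  rw [Complex.ofReal_mul, Complex.ofReal_exp, hexp]

lemma gO_integrable : Integrable (fun a : ℂ => ((1 + Complex.normSq a)^2)⁻¹) := by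
  have h4 : ((Module.finrank ℝ ℂ : ℝ) < 4) := by
    rw [Complex.finrank_real_complex]; norm_num
  have hint := (integrable_one_add_norm (E := ℂ) (μ := volume) h4).const_mul 4
  refine hint.mono' ?_ (Filter.Eventually.of_forall fun a => ?_)
  · refine Continuous.aestronglyMeasurable ?_
    exact ((continuous_const.add Complex.continuous_normSq).pow 2).inv₀
      (fun a => by have := Complex.normSq_nonneg a; exact (pow_pos (show (0:ℝ) < 1 + Complex.normSq a by linarith) 2).ne')
  · have hns : Complex.normSq a = ‖a‖^2 := by
      rw [Complex.sq_norm]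
    rw [hns]
    set n := ‖a‖ with hdefn
    have hn0 : 0 ≤ n := norm_nonneg a
    have h1 : (1+n)^(-(4:ℝ)) = ((1+n)^(4:ℕ))⁻¹ := by
      rw [Real.rpow_neg (by positivity)]
      congr 1
      rw [← Real.rpow_natCast (1+n) 4]
      norm_num
    have hb : (1+n)^(4:ℕ) ≤ 4 * (1+n^2)^2 := by
      nlinarith [sq_nonneg (1-n), sq_nonneg n, sq_nonneg (1-n^2)]
    rw [Real.norm_eq_abs, abs_of_pos (by positivity), h1,
      show (4:ℝ) * (((1+n)^(4:ℕ))⁻¹) = ((1+n)^(4:ℕ)/4)⁻¹ by field_simp]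
    have hle : (1+n)^(4:ℕ)/4 ≤ (1+n^2)^2 := by linarith
    have h2 := one_div_le_one_div_of_le (show (0:ℝ) < (1+n)^(4:ℕ)/4 by positivity) hle
    simpa [one_div] using h2

lemma lInt_eq (s : ℝ) (w z : ℂ × ℂ) :
    lInt s w z = phF s w z *
      ((((1 + Complex.normSq z.1)^2)⁻¹ * ((1 + Complex.normSq z.2)^2)⁻¹ : ℝ) : ℂ) := by
  rw [lInt, phF, div_eq_mul_inv]
  congr 1
  rw [← Complex.ofReal_inv]
  congr 1
  rw [mul_inv, Complex.sq_norm, Complex.sq_norm]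

lemma phF_cont (s : ℝ) : Continuous fun p : (ℂ × ℂ) × (ℂ × ℂ) => phF s p.1 p.2 := by
  unfold phF
  refine Complex.continuous_exp.comp (continuous_const.mul (Complex.continuous_ofReal.comp
    (Complex.continuous_im.comp ?_)))
  refine ((continuous_snd.fst.mul continuous_fst.fst).add
    (continuous_snd.snd.mul continuous_fst.snd)).sub ?_
  exact (continuous_const.mul continuous_snd.fst).mul
    (Complex.continuous_conj.comp continuous_snd.snd)

lemma norm_phF (s : ℝ) (w z : ℂ × ℂ) : ‖phF s w z‖ = 1 := norm_phase _

lemma part1 (s : ℝ) (w : ℂ × ℂ) : Integrable (fun z : ℂ × ℂ => lInt s w z) := by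
  have hg2 : Integrable (fun z : ℂ × ℂ =>
      ((((1 + Complex.normSq z.1)^2)⁻¹ * ((1 + Complex.normSq z.2)^2)⁻¹ : ℝ) : ℂ)) := by
    refine Integrable.ofReal ?_
    rw [MeasureTheory.Measure.volume_eq_prod]
    exact gO_integrable.mul_prod gO_integrable
  have h := hg2.bdd_mul (c := 1) ((phF_cont s).comp (Continuous.prodMk_right w)).aestronglyMeasurable
    (Filter.Eventually.of_forall fun z => le_of_eq (norm_phF s w z))
  refine h.congr (Filter.Eventually.of_forall fun z => ?_)
  exact (lInt_eq s w z).symm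

lemma one_add_normSq_pos (a : ℂ) : 0 < 1 + Complex.normSq a := by
  have := Complex.normSq_nonneg a; positivity

lemma QF_integral (z : ℂ × ℂ) :
    ∫ r, (QF z r : ℝ) ∂μr = ((1 + Complex.normSq z.1)^2)⁻¹ * ((1 + Complex.normSq z.2)^2)⁻¹ := by
  rw [μr, show (fun r : ℝ × ℝ => QF z r) = fun r : ℝ × ℝ =>
      (fun a => q (1 + Complex.normSq z.1) a) r.1 * (fun a => q (1 + Complex.normSq z.2) a) r.2
      from rfl,
    integral_prod_mul, q_integral (one_add_normSq_pos z.1), q_integral (one_add_normSq_pos z.2)]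

lemma QF_integrable_r (z : ℂ × ℂ) : Integrable (fun r => QF z r) μr := by
  exact (q_integrableOn (one_add_normSq_pos z.1)).mul_prod
    (q_integrableOn (one_add_normSq_pos z.2))

lemma QF_nonneg {z : ℂ × ℂ} {r : ℝ × ℝ} (h : r ∈ Set.Ioi (0:ℝ) ×ˢ Set.Ioi (0:ℝ)) :
    0 ≤ QF z r := by
  obtain ⟨h1, h2⟩ := h
  unfold QF q
  have := Real.exp_nonneg (-((1 + Complex.normSq z.1) * r.1))
  have := Real.exp_nonneg (-((1 + Complex.normSq z.2) * r.2))
  have := le_of_lt (Set.mem_Ioi.mp h1)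
  have := le_of_lt (Set.mem_Ioi.mp h2)
  positivity

lemma ae_mem_μr : ∀ᵐ r ∂μr, r ∈ Set.Ioi (0:ℝ) ×ˢ Set.Ioi (0:ℝ) := by
  rw [μr, MeasureTheory.Measure.prod_restrict]
  exact ae_restrict_mem (measurableSet_Ioi.prod measurableSet_Ioi)

lemma QF_cont : Continuous fun p : (ℂ × ℂ) × (ℝ × ℝ) => QF p.1 p.2 := by
  unfold QF q
  refine Continuous.mul (Continuous.mul ?_ ?_) (Continuous.mul ?_ ?_)
  · exact continuous_snd.fst
  · exact Real.continuous_exp.comp (((continuous_const.add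
      (Complex.continuous_normSq.comp continuous_fst.fst)).mul continuous_snd.fst).neg)
  · exact continuous_snd.snd
  · exact Real.continuous_exp.comp (((continuous_const.add
      (Complex.continuous_normSq.comp continuous_fst.snd)).mul continuous_snd.snd).neg)

lemma swap_int (s : ℝ) (w : ℂ × ℂ) :
    Integrable (Function.uncurry fun (z : ℂ × ℂ) (r : ℝ × ℝ) => phF s w z * ((QF z r : ℝ) : ℂ))
      ((volume : Measure (ℂ × ℂ)).prod μr) := by
  have hmeas : AEStronglyMeasurable
      (Function.uncurry fun (z : ℂ × ℂ) (r : ℝ × ℝ) => phF s w z * ((QF z r : ℝ) : ℂ))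
      ((volume : Measure (ℂ × ℂ)).prod μr) := by
    refine Continuous.aestronglyMeasurable ?_
    exact (((phF_cont s).comp (Continuous.prodMk_right w)).comp continuous_fst).mul
      (Complex.continuous_ofReal.comp QF_cont)
  refine (integrable_prod_iff hmeas).2 ⟨?_, ?_⟩
  · refine Filter.Eventually.of_forall fun z => ?_
    exact Integrable.const_mul ((QF_integrable_r z).ofReal) (phF s w z)
  · have hg : Integrable (fun z : ℂ × ℂ =>
        ((1 + Complex.normSq z.1)^2)⁻¹ * ((1 + Complex.normSq z.2)^2)⁻¹) := by
      rw [MeasureTheory.Measure.volume_eq_prod]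
      exact gO_integrable.mul_prod gO_integrable
    refine hg.congr (Filter.Eventually.of_forall fun z => ?_)
    have hval : (∫ r, ‖phF s w z * ((QF z r : ℝ) : ℂ)‖ ∂μr)
        = ((1 + Complex.normSq z.1)^2)⁻¹ * ((1 + Complex.normSq z.2)^2)⁻¹ := by
      rw [← QF_integral z]
      refine integral_congr_ae ?_
      filter_upwards [ae_mem_μr] with r hr
      rw [norm_mul, norm_phF, one_mul, Complex.norm_real, Real.norm_eq_abs,
        _root_.abs_of_nonneg (QF_nonneg hr)]
    exact hval.symm

lemma swap_eq (s : ℝ) (w : ℂ × ℂ) :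
    ∫ z : ℂ × ℂ, lInt s w z = ∫ r, F2 s (r, w) ∂μr := by
  have h1 : ∫ z : ℂ × ℂ, lInt s w z
      = ∫ z : ℂ × ℂ, ∫ r, phF s w z * ((QF z r : ℝ) : ℂ) ∂μr := by
    refine integral_congr_ae (Filter.Eventually.of_forall fun z => ?_)
    beta_reduce
    rw [lInt_eq s w z, MeasureTheory.integral_const_mul, ← QF_integral z]
    congr 1
    exact integral_ofReal.symm
  rw [h1]
  exact integral_integral_swap (swap_int s w)

lemma exp_split {N r : ℝ} : rexp (-((1+N)*r)) = rexp (-r) * rexp (-(r*N)) := by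
  rw [← Real.exp_add]; congr 1; ring

lemma hptAll (s : ℝ) (w : ℂ × ℂ) {r₁ r₂ : ℝ} (z : ℂ × ℂ) :
    phF s w z * ((QF z (r₁, r₂) : ℝ) : ℂ) =
      (Complex.exp (-Complex.I * (((z.1 * w.1).im : ℝ) : ℂ)) *
        ((r₁ * rexp (-r₁) * rexp (-(r₁ * Complex.normSq z.1)) * (r₂ * rexp (-r₂)) : ℝ) : ℂ)) *
      (Complex.exp (-Complex.I * (((z.2 * uC s w z.1).im : ℝ) : ℂ)) *
        ((rexp (-(r₂ * Complex.normSq z.2)) : ℝ) : ℂ)) := by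
  have him : (z.1 * w.1 + z.2 * w.2 - ((s/4 : ℝ) : ℂ) * z.1 * (starRingEnd ℂ z.2)).im
      = (z.1 * w.1).im + (z.2 * uC s w z.1).im := by
    unfold uC
    simp only [Complex.add_im, Complex.sub_im, Complex.mul_im, Complex.mul_re,
      Complex.add_re, Complex.conj_re, Complex.conj_im, Complex.ofReal_re, Complex.ofReal_im]
    ring
  unfold phF QF q
  rw [him, Complex.ofReal_add, mul_add, Complex.exp_add, exp_split, exp_split]
  push_cast
  ring

lemma hInt (s : ℝ) (w : ℂ × ℂ) {r₁ r₂ : ℝ} (h₁ : 0 < r₁) (h₂ : 0 < r₂) :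
    Integrable (fun z : ℂ × ℂ => phF s w z * ((QF z (r₁, r₂) : ℝ) : ℂ))
      ((volume : Measure ℂ).prod (volume : Measure ℂ)) := by
  have hmem : ((r₁, r₂) : ℝ × ℝ) ∈ Set.Ioi (0:ℝ) ×ˢ Set.Ioi (0:ℝ) :=
    Set.mem_prod.mpr ⟨h₁, h₂⟩
  have hQcont : Continuous fun z : ℂ × ℂ => (QF z (r₁, r₂) : ℝ) :=
    QF_cont.comp (continuous_id.prodMk continuous_const)
  have hmeas : AEStronglyMeasurable (fun z : ℂ × ℂ => phF s w z * ((QF z (r₁, r₂) : ℝ) : ℂ))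
      ((volume : Measure ℂ).prod (volume : Measure ℂ)) := by
    rw [← MeasureTheory.Measure.volume_eq_prod]
    exact (((phF_cont s).comp (Continuous.prodMk_right w)).mul
      (Complex.continuous_ofReal.comp hQcont)).aestronglyMeasurable
  have hQint1 : ∀ z₁ : ℂ, Integrable (fun z₂ : ℂ => (QF (z₁, z₂) (r₁, r₂) : ℝ)) := by
    intro z₁
    have h := (gaussR_integrable h₂).const_mul (q (1 + Complex.normSq z₁) r₁ * (r₂ * rexp (-r₂)))
    refine h.congr (Filter.Eventually.of_forall fun z₂ => ?_)
    show _ = QF (z₁, z₂) (r₁, r₂)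
    unfold QF q
    rw [show rexp (-((1 + Complex.normSq z₂) * r₂)) = rexp (-r₂) * rexp (-(r₂ * Complex.normSq z₂))
      from exp_split]
    ring
  refine (integrable_prod_iff hmeas).2 ⟨?_, ?_⟩
  · refine Filter.Eventually.of_forall fun z₁ => ?_
    refine Integrable.bdd_mul (c := 1) ((hQint1 z₁).ofReal) ?_ (Filter.Eventually.of_forall fun z₂ => le_of_eq (norm_phF s w _))
    exact (((phF_cont s).comp (Continuous.prodMk_right w)).comp
      ((continuous_const (y := z₁)).prodMk continuous_id)).aestronglyMeasurable
  · have hqz : ∀ {r : ℝ}, 0 < r → Integrable (fun a : ℂ => q (1 + Complex.normSq a) r) := by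
      intro r hr
      have h := (gaussR_integrable hr).const_mul (r * rexp (-r))
      refine h.congr (Filter.Eventually.of_forall fun a => ?_)
      show _ = q _ r
      unfold q
      rw [exp_split]
      ring
    have hval : ∀ z₁ : ℂ, (∫ z₂ : ℂ, ‖phF s w (z₁, z₂) * ((QF (z₁, z₂) (r₁, r₂) : ℝ) : ℂ)‖)
        = q (1 + Complex.normSq z₁) r₁ * ∫ z₂ : ℂ, q (1 + Complex.normSq z₂) r₂ := by
      intro z₁
      rw [← MeasureTheory.integral_const_mul]
      refine integral_congr_ae (Filter.Eventually.of_forall fun z₂ => ?_)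
      beta_reduce
      rw [norm_mul, norm_phF, one_mul, Complex.norm_real, Real.norm_eq_abs,
        _root_.abs_of_nonneg (QF_nonneg hmem)]
      rfl
    exact (((hqz h₁).mul_const _).congr (Filter.Eventually.of_forall fun z₁ => (hval z₁).symm))

lemma ρC_pos {s r₁ r₂ : ℝ} (h₁ : 0 < r₁) (h₂ : 0 < r₂) : 0 < ρC s r₁ r₂ := by
  unfold ρC
  positivity

lemma normSq_uC (s : ℝ) (w : ℂ × ℂ) (z₁ : ℂ) :
    Complex.normSq (uC s w z₁) = Complex.normSq w.2 + (s/4)^2 * Complex.normSq z₁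
      + 2*(s/4)*(w.2.re * z₁.re - w.2.im * z₁.im) := by
  unfold uC
  simp only [Complex.normSq_apply, Complex.add_re, Complex.add_im, Complex.mul_re,
    Complex.mul_im, Complex.conj_re, Complex.conj_im, Complex.ofReal_re, Complex.ofReal_im]
  ring

lemma hpt2 (s : ℝ) (w : ℂ × ℂ) {r₁ r₂ : ℝ} (h₁ : 0 < r₁) (h₂ : 0 < r₂) (z₁ : ℂ) :
    (Complex.exp (-Complex.I * (((z₁ * w.1).im : ℝ) : ℂ)) *
        ((r₁ * rexp (-r₁) * rexp (-(r₁ * Complex.normSq z₁)) * (r₂ * rexp (-r₂)) : ℝ) : ℂ)) *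
      (((π/r₂) * rexp (-(Complex.normSq (uC s w z₁) / (4*r₂))) : ℝ) : ℂ) =
    ((r₁ * rexp (-r₁) * (r₂ * rexp (-r₂)) * (π/r₂) * rexp (-(Complex.normSq w.2/(4*r₂))) : ℝ) : ℂ) *
      Complex.exp (((-ρC s r₁ r₂ : ℝ) : ℂ) * z₁.re^2 + C1 s r₁ r₂ w * z₁.re +
        (((-ρC s r₁ r₂ : ℝ) : ℂ) * z₁.im^2 + C2 s r₁ r₂ w * z₁.im)) := by
  have h2c : ((r₂ : ℝ) : ℂ) ≠ 0 := Complex.ofReal_ne_zero.mpr h₂.ne'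
  set SL : ℂ := -Complex.I * (((z₁ * w.1).im : ℝ) : ℂ) +
      (((-(r₁ * Complex.normSq z₁) : ℝ) : ℂ) +
        ((-(Complex.normSq (uC s w z₁) / (4*r₂)) : ℝ) : ℂ)) with hSL
  set SR : ℂ := (((-ρC s r₁ r₂ : ℝ) : ℂ) * z₁.re^2 + C1 s r₁ r₂ w * z₁.re +
      (((-ρC s r₁ r₂ : ℝ) : ℂ) * z₁.im^2 + C2 s r₁ r₂ w * z₁.im)) +
      ((-(Complex.normSq w.2/(4*r₂)) : ℝ) : ℂ) with hSR
  have e1 : (Complex.exp (-Complex.I * (((z₁ * w.1).im : ℝ) : ℂ)) *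
        ((r₁ * rexp (-r₁) * rexp (-(r₁ * Complex.normSq z₁)) * (r₂ * rexp (-r₂)) : ℝ) : ℂ)) *
      (((π/r₂) * rexp (-(Complex.normSq (uC s w z₁) / (4*r₂))) : ℝ) : ℂ)
      = ((r₁ * rexp (-r₁) * (r₂ * rexp (-r₂)) * (π/r₂) : ℝ) : ℂ) * Complex.exp SL := by
    rw [hSL]
    push_cast
    simp only [Complex.exp_add]
    ring
  have e2 : ((r₁ * rexp (-r₁) * (r₂ * rexp (-r₂)) * (π/r₂) * rexp (-(Complex.normSq w.2/(4*r₂))) : ℝ) : ℂ) *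
      Complex.exp (((-ρC s r₁ r₂ : ℝ) : ℂ) * z₁.re^2 + C1 s r₁ r₂ w * z₁.re +
        (((-ρC s r₁ r₂ : ℝ) : ℂ) * z₁.im^2 + C2 s r₁ r₂ w * z₁.im))
      = ((r₁ * rexp (-r₁) * (r₂ * rexp (-r₂)) * (π/r₂) : ℝ) : ℂ) * Complex.exp SR := by
    rw [hSR]
    push_cast
    simp only [Complex.exp_add]
    ring
  rw [e1, e2]
  congr 1
  congr 1
  rw [hSL, hSR]
  simp only [normSq_uC]
  simp only [Complex.mul_im, C1, C2, A1, A2, ρC, Complex.normSq_apply]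
  push_cast
  ring

lemma F2_closed (s : ℝ) (w : ℂ × ℂ) {r₁ r₂ : ℝ} (h₁ : 0 < r₁) (h₂ : 0 < r₂) :
    F2 s ((r₁, r₂), w) =
      ((r₁ * rexp (-r₁) * (r₂ * rexp (-r₂)) * (π/r₂) * rexp (-(Complex.normSq w.2/(4*r₂))) : ℝ) : ℂ) *
        (((π/ρC s r₁ r₂ : ℝ) : ℂ) *
          Complex.exp (((C1 s r₁ r₂ w)^2 + (C2 s r₁ r₂ w)^2)/(4*((ρC s r₁ r₂ : ℝ) : ℂ)))) := by
  have hρ := ρC_pos (s := s) h₁ h₂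
  have hInt' := (hInt s w h₁ h₂).congr
    (Filter.Eventually.of_forall fun z => hptAll s w (r₁ := r₁) (r₂ := r₂) z)
  show (∫ z : ℂ × ℂ, phF s w z * ((QF z (r₁, r₂) : ℝ) : ℂ)) = _
  rw [MeasureTheory.Measure.volume_eq_prod]
  rw [integral_congr_ae (Filter.Eventually.of_forall fun z =>
    hptAll s w (r₁ := r₁) (r₂ := r₂) z)]
  rw [MeasureTheory.integral_prod _ hInt']
  simp only [MeasureTheory.integral_const_mul, gaussTwist h₂]
  simp only [hpt2 s w h₁ h₂]
  rw [MeasureTheory.integral_const_mul, gaussC hρ]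

lemma F2_norm (s : ℝ) (w : ℂ × ℂ) {r₁ r₂ : ℝ} (h₁ : 0 < r₁) (h₂ : 0 < r₂) :
    ‖F2 s ((r₁, r₂), w)‖ = Kf s r₁ r₂ w := by
  have hρ := ρC_pos (s := s) h₁ h₂
  have hρne : r₁ + (s/4)^2/(4*r₂) ≠ 0 := by positivity
  have hre : ((((C1 s r₁ r₂ w)^2 + (C2 s r₁ r₂ w)^2))/(4*((ρC s r₁ r₂ : ℝ) : ℂ))).re
      = (A1 s r₂ w^2 + A2 s r₂ w^2 - w.1.im^2 - w.1.re^2)/(4*ρC s r₁ r₂) := by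
    have hC : (C1 s r₁ r₂ w)^2 + (C2 s r₁ r₂ w)^2
        = ((A1 s r₂ w^2 + A2 s r₂ w^2 - w.1.im^2 - w.1.re^2 : ℝ) : ℂ)
          + ((-2*(A1 s r₂ w * w.1.im + A2 s r₂ w * w.1.re) : ℝ) : ℂ) * Complex.I := by
      simp only [C1, C2]
      push_cast
      linear_combination ((w.1.im:ℂ)^2 + (w.1.re:ℂ)^2) * Complex.I_sq
    rw [hC, show (4*((ρC s r₁ r₂ : ℝ) : ℂ)) = ((4*ρC s r₁ r₂ : ℝ) : ℂ) by push_cast; ring,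
      add_div, Complex.add_re, Complex.div_ofReal_re, Complex.div_ofReal_re]
    simp [Complex.mul_re, ← Complex.ofReal_pow]
  have hexp : rexp (-(Complex.normSq w.2/(4*r₂))) *
        rexp ((A1 s r₂ w^2 + A2 s r₂ w^2 - w.1.im^2 - w.1.re^2)/(4*ρC s r₁ r₂))
      = rexp (-(r₂/(4*(r₂ * ρC s r₁ r₂)) * Complex.normSq w.1)) *
        rexp (-(r₁/(4*(r₂ * ρC s r₁ r₂)) * Complex.normSq w.2)) := by
    rw [← Real.exp_add, ← Real.exp_add]
    congr 1
    simp only [Complex.normSq_apply, A1, A2, ρC]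
    field_simp
    ring
  rw [F2_closed s w h₁ h₂, norm_mul, norm_mul, Complex.norm_real, Complex.norm_real,
    Complex.norm_exp, hre, Real.norm_eq_abs, Real.norm_eq_abs,
    abs_of_pos (by positivity), abs_of_pos (show (0:ℝ) < π/ρC s r₁ r₂ by positivity)]
  unfold Kf
  linear_combination (r₁ * rexp (-r₁) * (r₂ * rexp (-r₂)) * (π/r₂) * (π/ρC s r₁ r₂)) * hexp

lemma Kf_integrable (s : ℝ) {r₁ r₂ : ℝ} (h₁ : 0 < r₁) (h₂ : 0 < r₂) :
    Integrable (fun w : ℂ × ℂ => Kf s r₁ r₂ w) := by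
  have hρ := ρC_pos (s := s) h₁ h₂
  have hc1 : 0 < r₂/(4*(r₂ * ρC s r₁ r₂)) := by positivity
  have hc2 : 0 < r₁/(4*(r₂ * ρC s r₁ r₂)) := by positivity
  unfold Kf
  have h := (Integrable.mul_prod (gaussR_integrable hc1) (gaussR_integrable hc2)).const_mul
    (r₁ * rexp (-r₁) * (r₂ * rexp (-r₂)) * (π/r₂) * (π/ρC s r₁ r₂))
  rw [← MeasureTheory.Measure.volume_eq_prod] at h
  exact h

set_option maxHeartbeats 1000000 in
lemma Kf_integral (s : ℝ) {r₁ r₂ : ℝ} (h₁ : 0 < r₁) (h₂ : 0 < r₂) :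
    ∫ w : ℂ × ℂ, Kf s r₁ r₂ w =
      16 * π^4 * (r₁*r₂ + (s/4)^2/4) * (rexp (-r₁) * rexp (-r₂)) := by
  have hρ := ρC_pos (s := s) h₁ h₂
  have hρne : r₁ + (s/4)^2/(4*r₂) ≠ 0 := by positivity
  have hc1 : 0 < r₂/(4*(r₂ * ρC s r₁ r₂)) := by positivity
  have hc2 : 0 < r₁/(4*(r₂ * ρC s r₁ r₂)) := by positivity
  unfold Kf
  rw [MeasureTheory.integral_const_mul, MeasureTheory.Measure.volume_eq_prod,
    integral_prod_mul (f := fun a : ℂ => rexp (-(r₂/(4*(r₂ * ρC s r₁ r₂)) * Complex.normSq a)))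
      (g := fun a : ℂ => rexp (-(r₁/(4*(r₂ * ρC s r₁ r₂)) * Complex.normSq a))),
    gaussR_integral hc1, gaussR_integral hc2]
  have hρu : ρC s r₁ r₂ = r₁ + (s/4)^2/(4*r₂) := rfl
  rw [hρu]
  field_simp
  ring

lemma F2_meas_aux (s : ℝ) :
    Continuous fun p : (((ℝ × ℝ) × (ℂ × ℂ)) × (ℂ × ℂ)) => phF s p.1.2 p.2 := by
  unfold phF
  refine Complex.continuous_exp.comp (continuous_const.mul (Complex.continuous_ofReal.comp
    (Complex.continuous_im.comp ?_)))
  refine ((continuous_snd.fst.mul continuous_fst.snd.fst).add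
    (continuous_snd.snd.mul continuous_fst.snd.snd)).sub ?_
  exact (continuous_const.mul continuous_snd.fst).mul
    (Complex.continuous_conj.comp continuous_snd.snd)

set_option maxHeartbeats 1000000 in
lemma F2_meas (s : ℝ) : StronglyMeasurable (F2 s) := by
  have hqf : Continuous fun p : (((ℝ × ℝ) × (ℂ × ℂ)) × (ℂ × ℂ)) => ((QF p.2 p.1.1 : ℝ) : ℂ) :=
    Complex.continuous_ofReal.comp (QF_cont.comp (continuous_snd.prodMk continuous_fst.fst))
  have hcont := (F2_meas_aux s).mul hqf
  exact hcont.stronglyMeasurable.integral_prod_right'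

set_option maxHeartbeats 1000000 in
lemma F2_w_integrable (s : ℝ) {r₁ r₂ : ℝ} (h₁ : 0 < r₁) (h₂ : 0 < r₂) :
    Integrable (fun w : ℂ × ℂ => F2 s ((r₁, r₂), w)) := by
  refine (Kf_integrable s h₁ h₂).mono' ?_ (Filter.Eventually.of_forall fun w => ?_)
  · exact ((F2_meas s).comp_measurable
      (measurable_const.prodMk measurable_id)).aestronglyMeasurable
  · exact le_of_eq (F2_norm s w h₁ h₂)

lemma exp_neg_intOn : IntegrableOn (fun x : ℝ => rexp (-x)) (Set.Ioi (0:ℝ)) := by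
  have h := exp_neg_integrableOn_Ioi 0 (one_pos (α := ℝ))
  refine h.congr_fun (fun x _ => ?_) measurableSet_Ioi
  norm_num

set_option maxHeartbeats 1000000 in
lemma F2_integrable (s : ℝ) : Integrable (F2 s) (μr.prod (volume : Measure (ℂ × ℂ))) := by
  refine (integrable_prod_iff (F2_meas s).aestronglyMeasurable).2 ⟨?_, ?_⟩
  · filter_upwards [ae_mem_μr] with r hr
    obtain ⟨h₁, h₂⟩ := hr
    exact F2_w_integrable s h₁ h₂
  · have hq1 : IntegrableOn (fun x : ℝ => x * rexp (-x)) (Set.Ioi (0:ℝ)) := by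
      have h := q_integrableOn (one_pos (α := ℝ))
      refine h.congr_fun (fun x _ => ?_) measurableSet_Ioi
      unfold q
      norm_num
    have hexpl : Integrable (fun r : ℝ × ℝ =>
        16 * π^4 * (r.1*r.2 + (s/4)^2/4) * (rexp (-r.1) * rexp (-r.2))) μr := by
      have ha : Integrable (fun r : ℝ × ℝ =>
          (fun x => x * rexp (-x)) r.1 * (fun x => x * rexp (-x)) r.2) μr :=
        hq1.mul_prod hq1
      have hb : Integrable (fun r : ℝ × ℝ =>
          (fun x => rexp (-x)) r.1 * (fun x => rexp (-x)) r.2) μr :=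
        exp_neg_intOn.mul_prod exp_neg_intOn
      have hs := (ha.add (hb.const_mul ((s/4)^2/4))).const_mul (16 * π^4)
      refine hs.congr (Filter.Eventually.of_forall fun r => ?_)
      simp only [Pi.add_apply]
      ring
    refine hexpl.congr ?_
    filter_upwards [ae_mem_μr] with r hr
    obtain ⟨h₁, h₂⟩ := hr
    have hval : (∫ w : ℂ × ℂ, ‖F2 s (r, w)‖)
        = 16 * π^4 * (r.1*r.2 + (s/4)^2/4) * (rexp (-r.1) * rexp (-r.2)) := by
      rw [integral_congr_ae (Filter.Eventually.of_forall fun w : ℂ × ℂ =>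
        F2_norm s w h₁ h₂), Kf_integral s h₁ h₂]
    exact hval.symm


end

end Stmt16

theorem stmt_16 (s : ℝ) :
    (∀ w : ℂ × ℂ, Integrable (fun z : ℂ × ℂ => lInt s w z)) ∧
      Integrable (fun w : ℂ × ℂ => ∫ z : ℂ × ℂ, lInt s w z) := by
  refine ⟨Stmt16.part1 s, ?_⟩
  have h := (Stmt16.F2_integrable s).integral_prod_right
  refine h.congr ?_
  refine Filter.Eventually.of_forall fun w => ?_
  exact (Stmt16.swap_eq s w).symm
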